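/- An abelian group G is finitely discriminable (i.e., there is a finite subset of G \ {0} meeting every non-trivial subgroup) if and only if G is artinian, i.e., every descending chain of subgroups stabilizes. -/

import Mathlib

open AddSubgroup

section Helpers

variable {G : Type*} [AddCommGroup G]

/-- nonzero iff addOrderOf ≠ 1 helper -/
private lemma ord_ne_one_of_ne_zero {x : G} (hx : x ≠ 0) : addOrderOf x ≠ 1 := by
  intro h
  apply hx
  have := addOrderOf_nsmul_eq_zero x
  rw [h, one_nsmul] at this
  exact this

private lemma eq_zero_of_ord_eq_one {x : G} (h : addOrderOf x = 1) : x = 0 := by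
  have := addOrderOf_nsmul_eq_zero x
  rwa [h, one_nsmul] at this

/-- In a torsion abelian group, every nontrivial subgroup contains an element of prime order. -/
private lemma exists_prime_order (htor : ∀ x : G, IsOfFinAddOrder x)
    {H : AddSubgroup G} (hH : H ≠ ⊥) : ∃ x ∈ H, (addOrderOf x).Prime := by
  obtain ⟨⟨x, hxH⟩, hx0'⟩ := (AddSubgroup.ne_bot_iff_exists_ne_zero).1 hH
  have hx0 : x ≠ 0 := fun h => hx0' (Subtype.ext h)
  set n := addOrderOf (x : G) with hn
  have hn0 : n ≠ 0 := by
    exact (htor x).addOrderOf_pos.ne'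
  have hn1 : n ≠ 1 := ord_ne_one_of_ne_zero hx0
  set q := n.minFac with hq
  have hqp : q.Prime := Nat.minFac_prime hn1
  refine ⟨(n / q) • (x : G), H.nsmul_mem hxH _, ?_⟩
  have hdvd : n / q ∣ n := Nat.div_dvd_of_dvd (Nat.minFac_dvd n)
  have hne : n / q ≠ 0 := by
    intro h
    exact hn0 (by have := (Nat.div_mul_cancel (Nat.minFac_dvd n)).symm; rw [← hq, h, zero_mul] at this; exact this)
  rw [addOrderOf_nsmul' _ hne, ← hn, Nat.gcd_eq_right hdvd,
    Nat.div_div_self (Nat.minFac_dvd n) hn0]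
  exact hqp

/-- The subgroup of elements killed by `n`. -/
private def torsA (A : Type*) [AddCommGroup A] (n : ℕ) : AddSubgroup A :=
  AddMonoidHom.ker (AddMonoidHom.mk' (fun x => n • x) (fun a b => smul_add n a b))

private lemma mem_torsA {A : Type*} [AddCommGroup A] {n : ℕ} {x : A} :
    x ∈ torsA A n ↔ n • x = 0 := Iff.rfl

/-- The closure of a finite set of finite-order elements in an abelian group is finite. -/
private lemma finite_closure_of_torsion (s : Finset G)
    (hs : ∀ x ∈ s, IsOfFinAddOrder x) :
    ((AddSubgroup.closure (s : Set G) : AddSubgroup G) : Set G).Finite := by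
  classical
  induction s using Finset.induction_on with
  | empty => simp
  | @insert a t ha ih =>
      have h1 : (AddSubgroup.closure ({a} : Set G) : Set G).Finite := by
        rw [← AddSubgroup.zmultiples_eq_closure]
        exact (hs a (Finset.mem_insert_self a t)).finite_zmultiples
      have h2 := ih (fun x hx => hs x (Finset.mem_insert_of_mem hx))
      have hins : (insert a t : Finset G) = ({a} : Finset G) ∪ t := rfl
      rw [Finset.coe_insert, Set.insert_eq, AddSubgroup.closure_union]
      have hsub : ((AddSubgroup.closure ({a} : Set G) ⊔ AddSubgroup.closure (t : Set G) :
          AddSubgroup G) : Set G) ⊆ Set.image2 (· + ·)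
          (AddSubgroup.closure ({a} : Set G) : Set G)
          (AddSubgroup.closure (t : Set G) : Set G) := by
        intro x hx
        obtain ⟨y, hy, z, hz, rfl⟩ := AddSubgroup.mem_sup.1 hx
        exact Set.mem_image2_of_mem hy hz
      exact (Set.Finite.image2 _ h1 h2).subset hsub

end Helpers

section Crux

variable {G : Type*} [AddCommGroup G]

private lemma quotient_torsion (H : AddSubgroup G) (htor : ∀ x : G, IsOfFinAddOrder x) :
    ∀ y : G ⧸ H, IsOfFinAddOrder y := by
  intro y
  induction y using QuotientAddGroup.induction_on with
  | _ z =>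
    obtain ⟨n, hn, hz⟩ := isOfFinAddOrder_iff_nsmul_eq_zero.1 (htor z)
    exact isOfFinAddOrder_iff_nsmul_eq_zero.2
      ⟨n, hn, by rw [← QuotientAddGroup.mk_nsmul, hz, QuotientAddGroup.mk_zero]⟩

/-- Key finiteness: if the `q`-torsion of `G` is finite then so is the `q`-torsion of any
quotient of `G` (for torsion `G`). -/
private lemma crux (htor : ∀ x : G, IsOfFinAddOrder x) (q : ℕ)
    (hfin : ((torsA G q : AddSubgroup G) : Set G).Finite) (H : AddSubgroup G) :
    ((torsA (G ⧸ H) q : AddSubgroup (G ⧸ H)) : Set (G ⧸ H)).Finite := by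
  classical
  by_contra hinf
  set c := ((torsA G q : AddSubgroup G) : Set G).ncard with hc
  obtain ⟨t, hts, htcard⟩ := Set.Infinite.exists_subset_card_eq hinf (c + 1)
  set π := QuotientAddGroup.mk' H with hπ
  set s : Finset G := t.image Quotient.out with hs
  have houts : ∀ y ∈ t, Quotient.out y ∈ s := fun y hy => Finset.mem_image_of_mem _ hy
  set K := AddSubgroup.closure (s : Set G) with hK
  have hKfin : (K : Set G).Finite := finite_closure_of_torsion s (fun x _ => htor x)
  haveI : Finite K := hKfin.to_subtype
  have hπout : ∀ y : G ⧸ H, π (Quotient.out y) = y := fun y => QuotientAddGroup.out_eq' y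
  have hπs : π '' (s : Set G) = (t : Set (G ⧸ H)) := by
    ext y
    constructor
    · rintro ⟨x, hx, rfl⟩
      simp only [hs, Finset.coe_image, Set.mem_image, Finset.mem_coe] at hx
      obtain ⟨z, hz, rfl⟩ := hx
      rwa [hπout]
    · intro hy
      exact ⟨Quotient.out y, by simpa [hs] using houts y hy, hπout y⟩
  have hmapK : AddSubgroup.map π K = AddSubgroup.closure (t : Set (G ⧸ H)) := by
    rw [hK, AddMonoidHom.map_closure, hπs]
  have hWle : AddSubgroup.map π K ≤ torsA (G ⧸ H) q := by
    rw [hmapK]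
    exact (AddSubgroup.closure_le _).2 hts
  -- the smul-by-q endomorphism of K
  set φ : G →+ G := AddMonoidHom.mk' (fun x => q • x) (fun a b => smul_add q a b) with hφ
  set f : K →+ K := (φ.domRestrict K).codRestrict K (fun x => K.nsmul_mem x.2 q) with hf
  have hfval : ∀ x : K, ((f x : K) : G) = q • (x : G) := fun x => rfl
  haveI : Finite (K ⧸ f.range) := Quotient.finite _
  have h1 : Nat.card K = Nat.card (K ⧸ f.range) * Nat.card f.range :=
    AddSubgroup.card_eq_card_quotient_mul_card_addSubgroup _
  have h2 : Nat.card K = Nat.card (K ⧸ f.ker) * Nat.card f.ker :=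
    AddSubgroup.card_eq_card_quotient_mul_card_addSubgroup _
  have h3 : Nat.card (K ⧸ f.ker) = Nat.card f.range :=
    Nat.card_congr (QuotientAddGroup.quotientKerEquivRange f).toEquiv
  have hrpos : 0 < Nat.card f.range := Nat.card_pos
  have hqr : Nat.card (K ⧸ f.range) = Nat.card f.ker := by
    have := h1.symm.trans h2
    rw [h3] at this
    have h' : Nat.card f.range * Nat.card (K ⧸ f.range)
        = Nat.card f.range * Nat.card f.ker := by
      rw [Nat.mul_comm (Nat.card f.range)]
      exact this
    exact Nat.eq_of_mul_eq_mul_left hrpos h'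
  haveI : Finite (torsA G q) := hfin.to_subtype
  have hkerle : Nat.card f.ker ≤ c := by
    have hj : Function.Injective (fun x : f.ker => (⟨((x : K) : G), by
        have hx : f (x : K) = 0 := x.2
        have : ((f (x : K) : K) : G) = 0 := by rw [hx]; rfl
        rw [hfval] at this
        exact mem_torsA.2 this⟩ : torsA G q)) := by
      intro a b hab
      apply Subtype.ext
      apply Subtype.ext
      simpa using congrArg Subtype.val hab
    have := Nat.card_le_card_of_injective _ hj
    rwa [hc, ← Nat.card_coe_set_eq]
  -- the surjection side
  set g : K →+ G ⧸ H := π.comp K.subtype with hg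
  have hrk : f.range ≤ g.ker := by
    rintro x ⟨k, rfl⟩
    have h1' : g (f k) = π (q • (k : G)) := by rw [hg]; exact congrArg π (hfval k)
    have h2' : π ((k : G)) ∈ AddSubgroup.map π K := AddSubgroup.mem_map_of_mem π k.2
    have h3' : q • π ((k : G)) = 0 := mem_torsA.1 (hWle h2')
    rw [AddMonoidHom.mem_ker, h1', map_nsmul, h3']
  set g' := QuotientAddGroup.lift f.range g hrk with hg'
  set j : {y // y ∈ t} → K ⧸ f.range := fun y =>
    QuotientAddGroup.mk ⟨Quotient.out y.val, AddSubgroup.subset_closure (houts y.val y.2)⟩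
    with hj
  have hgj : ∀ y : {y // y ∈ t}, g' (j y) = y.val := fun y => hπout y.val
  have hjinj : Function.Injective j := by
    intro a b hab
    apply Subtype.ext
    rw [← hgj a, ← hgj b, hab]
  have hle : Nat.card {y // y ∈ t} ≤ Nat.card (K ⧸ f.range) :=
    Nat.card_le_card_of_injective j hjinj
  rw [Nat.card_eq_fintype_card, Fintype.card_coe, htcard, hqr] at hle
  omega

end Crux

section FinDiscConsequences

variable {G : Type*} [AddCommGroup G]

private lemma torsion_of_finDisc (h : ∃ F : Finset G, (0 : G) ∉ F ∧
    ∀ H : AddSubgroup G, H ≠ ⊥ → ∃ g ∈ F, g ∈ H) : ∀ x : G, IsOfFinAddOrder x := by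
  classical
  obtain ⟨F, hF0, hF⟩ := h
  intro x
  by_contra hx
  have hinj : ∀ c : ℤ, c • x = 0 → c = 0 := by
    intro c hc
    by_contra hc0
    apply hx
    refine isOfFinAddOrder_iff_nsmul_eq_zero.2 ⟨c.natAbs, Int.natAbs_pos.2 hc0, ?_⟩
    have h1 : ((c.natAbs : ℤ)) • x = 0 := by
      rcases Int.natAbs_eq c with h | h
      · rw [← h, hc]
      · rw [← neg_eq_iff_eq_neg.2 h, neg_zsmul, hc, neg_zero]
    rw [← natCast_zsmul, h1]
  set v : G → ℕ := fun a => if h : ∃ c : ℤ, a = c • x then h.choose.natAbs else 0 with hv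
  set n : ℕ := 1 + F.sup v with hn
  have hx0 : x ≠ 0 := by
    intro h
    exact hx (by rw [h]; exact IsOfFinAddOrder.zero)
  have hnz : ((n : ℤ)) • x ≠ 0 := by
    intro h
    have := hinj _ h
    omega
  have hne : zmultiples ((n : ℤ) • x) ≠ ⊥ := by
    rw [AddSubgroup.ne_bot_iff_exists_ne_zero]
    exact ⟨⟨(n : ℤ) • x, mem_zmultiples _⟩, fun h => hnz (by simpa using congrArg Subtype.val h)⟩
  obtain ⟨a, haF, ha⟩ := hF _ hne
  obtain ⟨k, hk⟩ := mem_zmultiples_iff.1 ha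
  have hax : a = (k * (n : ℤ)) • x := by rw [mul_zsmul, hk]
  have hex : ∃ c : ℤ, a = c • x := ⟨k * n, hax⟩
  have hch : hex.choose = k * n := by
    have h1 : (hex.choose - k * n) • x = 0 := by
      rw [sub_zsmul, ← hex.choose_spec, ← hax]; abel
    have := hinj _ h1
    omega
  have hk0 : k ≠ 0 := by
    intro h
    apply hF0
    have : a = 0 := by rw [hax, h, zero_mul, zero_zsmul]
    rwa [this] at haF
  have hva : v a = (k * (n : ℤ)).natAbs := by
    rw [hv]
    simp only
    rw [dif_pos hex, hch]
  have hle : v a ≤ F.sup v := Finset.le_sup haF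
  have hge : n ≤ (k * (n : ℤ)).natAbs := by
    rw [Int.natAbs_mul]
    have h1 : 1 ≤ k.natAbs := Int.natAbs_pos.2 hk0
    have h2 : (n : ℤ).natAbs = n := Int.natAbs_natCast n
    nlinarith [h2]
  omega

private lemma primeOrder_finite (h : ∃ F : Finset G, (0 : G) ∉ F ∧
    ∀ H : AddSubgroup G, H ≠ ⊥ → ∃ g ∈ F, g ∈ H) (htor : ∀ x : G, IsOfFinAddOrder x) :
    {x : G | (addOrderOf x).Prime}.Finite := by
  obtain ⟨F, hF0, hF⟩ := h
  have hsub : {x : G | (addOrderOf x).Prime} ⊆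
      ⋃ a ∈ (F : Set G), (zmultiples a : Set G) := by
    intro x hx
    have hp : (addOrderOf x).Prime := hx
    set p := addOrderOf x with hpdef
    have hx0 : x ≠ 0 := by
      intro h
      rw [h, addOrderOf_zero] at hpdef
      exact Nat.not_prime_one (hpdef ▸ hp)
    have hpx : (p : ℤ) • x = 0 := by
      rw [natCast_zsmul, hpdef, addOrderOf_nsmul_eq_zero]
    have hne : zmultiples x ≠ ⊥ := by
      rw [AddSubgroup.ne_bot_iff_exists_ne_zero]
      exact ⟨⟨x, mem_zmultiples _⟩, fun h => hx0 (by simpa using congrArg Subtype.val h)⟩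
    obtain ⟨a, haF, ha⟩ := hF _ hne
    obtain ⟨k, hk⟩ := mem_zmultiples_iff.1 ha
    have ha0 : a ≠ 0 := fun h => hF0 (h ▸ haF)
    have hpk : ¬ ((p : ℤ) ∣ k) := by
      rintro ⟨m, rfl⟩
      apply ha0
      rw [← hk, mul_comm, mul_zsmul, hpx, smul_zero]
    have hcop : IsCoprime (k : ℤ) (p : ℤ) := by
      rw [Int.isCoprime_iff_gcd_eq_one]
      have hnd : ¬ (p ∣ k.natAbs) := by
        intro hd
        exact hpk (Int.natCast_dvd_natCast.2 hd |>.trans (Int.natAbs_dvd.2 dvd_rfl))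
      have : p.Coprime k.natAbs := (Nat.Prime.coprime_iff_not_dvd hp).2 hnd
      unfold Int.gcd
      simpa [Nat.coprime_comm] using this
    obtain ⟨u, v, huv⟩ := hcop
    have hxa : x = u • a := by
      have h1 : (u * k + v * p) • x = x := by rw [huv, one_zsmul]
      rw [← h1, add_zsmul, mul_zsmul, hk, mul_zsmul, hpx, smul_zero, add_zero]
    refine Set.mem_biUnion haF ?_
    rw [hxa]
    exact zsmul_mem (mem_zmultiples a) u
  exact (Set.Finite.biUnion F.finite_toSet
    (fun a _ => (htor a).finite_zmultiples)).subset hsub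

end FinDiscConsequences

section Forward

variable {G : Type*} [AddCommGroup G]

private lemma artinian_of_finDisc' (h : ∃ F : Finset G, (0 : G) ∉ F ∧
    ∀ H : AddSubgroup G, H ≠ ⊥ → ∃ g ∈ F, g ∈ H) :
    ∀ f : ℕ → AddSubgroup G, (∀ n, f (n + 1) ≤ f n) → ∃ n, ∀ m, n ≤ m → f m = f n := by
  classical
  intro f hdesc
  have htor := torsion_of_finDisc h
  have hX := primeOrder_finite h htor
  have hfanti : Antitone f := antitone_nat_of_succ_le hdesc
  set H : AddSubgroup G := ⨅ n, f n with hH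
  have hHle : ∀ n, H ≤ f n := fun n => iInf_le f n
  set π := QuotientAddGroup.mk' H with hπdef
  have hkerπ : π.ker = H := QuotientAddGroup.ker_mk' H
  set c : ℕ → AddSubgroup (G ⧸ H) := fun n => AddSubgroup.map π (f n) with hc
  have hcomap : ∀ n, AddSubgroup.comap π (c n) = f n := by
    intro n
    rw [hc]
    simp only
    rw [AddSubgroup.comap_map_eq, hkerπ, sup_of_le_left (hHle n)]
  have hcanti : ∀ m n, m ≤ n → c n ≤ c m := fun m n hmn =>
    AddSubgroup.map_mono (hfanti hmn)
  have hQtor := quotient_torsion H htor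
  set P : Set ℕ := {q | q.Prime ∧ torsA (G ⧸ H) q ≠ ⊥} with hP
  have hPsub : P ⊆ addOrderOf '' {x : G | (addOrderOf x).Prime} := by
    rintro q ⟨hq, hne⟩
    obtain ⟨⟨y, hy⟩, hy0'⟩ := AddSubgroup.ne_bot_iff_exists_ne_zero.1 hne
    have hy0 : y ≠ 0 := fun h0 => hy0' (Subtype.ext h0)
    set g := Quotient.out y with hgdef
    have hπg : π g = y := QuotientAddGroup.out_eq' y
    have hqg : q • g ∈ H := by
      rw [← hkerπ, AddMonoidHom.mem_ker, map_nsmul, hπg]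
      exact mem_torsA.1 hy
    set m := addOrderOf g with hm
    have hm0 : m ≠ 0 := (htor g).addOrderOf_pos.ne'
    have hmg : (m : ℤ) • g = 0 := by
      rw [natCast_zsmul, hm, addOrderOf_nsmul_eq_zero]
    have hqm : q ∣ m := by
      by_contra hnd
      have hcop : IsCoprime ((q : ℕ) : ℤ) ((m : ℕ) : ℤ) := by
        rw [Nat.isCoprime_iff_coprime]
        exact (Nat.Prime.coprime_iff_not_dvd hq).2 hnd
      obtain ⟨u, v, huv⟩ := hcop
      have hgH : g ∈ H := by
        have h1 : g = (u * q + v * m) • g := by rw [huv, one_zsmul]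
        rw [h1, add_zsmul, mul_zsmul, mul_zsmul, hmg, smul_zero]
        refine H.add_mem (H.zsmul_mem ?_ u) H.zero_mem
        rw [natCast_zsmul]
        exact hqg
      exact hy0 (by rw [← hπg]; exact (QuotientAddGroup.eq_zero_iff _).2 hgH)
    have hdq : m / q ≠ 0 := by
      intro h0
      exact hm0 (by simpa [h0] using (Nat.div_mul_cancel hqm).symm)
    have hord : addOrderOf ((m / q) • g) = q := by
      rw [addOrderOf_nsmul' _ hdq, ← hm, Nat.gcd_eq_right (Nat.div_dvd_of_dvd hqm),
        Nat.div_div_self hqm hm0]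
    exact ⟨(m / q) • g, by rw [Set.mem_setOf_eq, hord]; exact hq, hord⟩
  have hPfin : P.Finite := (hX.image _).subset hPsub
  have hGq : ∀ q : ℕ, q.Prime → ((torsA G q : AddSubgroup G) : Set G).Finite := by
    intro q hq
    have hsub : ((torsA G q : AddSubgroup G) : Set G) ⊆
        insert 0 {x : G | (addOrderOf x).Prime} := by
      intro x hx
      rcases eq_or_ne x 0 with rfl | hx0
      · exact Set.mem_insert _ _
      · refine Set.mem_insert_of_mem _ ?_
        rw [Set.mem_setOf_eq]
        have hdvd : addOrderOf x ∣ q := addOrderOf_dvd_of_nsmul_eq_zero (mem_torsA.1 hx)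
        rcases (Nat.Prime.eq_one_or_self_of_dvd hq _ hdvd) with h1 | h1
        · exact absurd (eq_zero_of_ord_eq_one h1) hx0
        · rw [h1]; exact hq
    exact (hX.insert 0).subset hsub
  have hstab : ∀ q ∈ P, ∃ N : ℕ, ∀ n, N ≤ n →
      ((c n ⊓ torsA (G ⧸ H) q : AddSubgroup (G ⧸ H)) : Set (G ⧸ H)) ⊆ {0} := by
    intro q hqP
    have hqfin : ((torsA (G ⧸ H) q : AddSubgroup (G ⧸ H)) : Set (G ⧸ H)).Finite :=
      crux htor q (hGq q hqP.1) H
    have hzn : ∀ z : G ⧸ H, z ≠ 0 → ∃ n, z ∉ c n := by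
      intro z hz0
      by_contra hall
      push_neg at hall
      apply hz0
      have hg : ∀ n, Quotient.out z ∈ f n := by
        intro n
        rw [← hcomap n]
        show π (Quotient.out z) ∈ c n
        have : π (Quotient.out z) = z := QuotientAddGroup.out_eq' z
        rw [this]
        exact hall n
      have hmem : Quotient.out z ∈ H := AddSubgroup.mem_iInf.2 hg
      rw [← QuotientAddGroup.out_eq' z]
      exact (QuotientAddGroup.eq_zero_iff _).2 hmem
    set Z := {z : G ⧸ H | z ∈ torsA (G ⧸ H) q ∧ z ≠ 0} with hZ
    have hZfin : Z.Finite := hqfin.subset (fun z hz => hz.1)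
    set Nf : G ⧸ H → ℕ := fun z => if h0 : z ≠ 0 then (hzn z h0).choose else 0 with hNf
    refine ⟨hZfin.toFinset.sup Nf, ?_⟩
    intro n hn z hzmem
    have hzmem' : z ∈ c n ⊓ torsA (G ⧸ H) q := hzmem
    rcases eq_or_ne z 0 with rfl | hz0
    · exact Set.mem_singleton _
    · exfalso
      have hzZ : z ∈ Z := ⟨(AddSubgroup.mem_inf.1 hzmem').2, hz0⟩
      have hNz : Nf z = (hzn z hz0).choose := dif_pos hz0
      have hlez : Nf z ≤ hZfin.toFinset.sup Nf := Finset.le_sup (hZfin.mem_toFinset.2 hzZ)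
      have hnot : z ∉ c (Nf z) := hNz ▸ (hzn z hz0).choose_spec
      exact hnot (hcanti (Nf z) n (le_trans hlez hn) (AddSubgroup.mem_inf.1 hzmem').1)
  choose! N hN using hstab
  set N0 := hPfin.toFinset.sup N with hN0
  have hcomapbot : AddSubgroup.comap π (⊥ : AddSubgroup (G ⧸ H)) = H := by
    ext x
    simp only [AddSubgroup.mem_comap, AddSubgroup.mem_bot]
    constructor
    · intro h0
      have hx : x ∈ π.ker := AddMonoidHom.mem_ker.2 h0
      rwa [hkerπ] at hx
    · intro h0
      have hx : x ∈ π.ker := by rw [hkerπ]; exact h0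
      exact AddMonoidHom.mem_ker.1 hx
  have hbot : ∀ n, N0 ≤ n → f n = H := by
    intro n hn
    have hcbot : c n = ⊥ := by
      by_contra hne
      obtain ⟨y, hyc, hyp⟩ := exists_prime_order hQtor hne
      set q := addOrderOf y with hq
      have hy0 : y ≠ 0 := by
        intro h0
        rw [h0, addOrderOf_zero] at hq
        exact Nat.not_prime_one (hq ▸ hyp)
      have hyt : y ∈ torsA (G ⧸ H) q := mem_torsA.2 (addOrderOf_nsmul_eq_zero y)
      have hqP : q ∈ P := ⟨hyp, AddSubgroup.ne_bot_iff_exists_ne_zero.2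
        ⟨⟨y, hyt⟩, fun h0 => hy0 (by simpa using congrArg Subtype.val h0)⟩⟩
      have hNn : N q ≤ n := le_trans (Finset.le_sup (hPfin.mem_toFinset.2 hqP)) hn
      have hz : y ∈ ({0} : Set (G ⧸ H)) := (hN q hqP n hNn) (AddSubgroup.mem_inf.2 ⟨hyc, hyt⟩)
      exact hy0 hz
    rw [← hcomap n, hcbot, hcomapbot]
  refine ⟨N0, fun m hm => ?_⟩
  rw [hbot m hm, hbot N0 le_rfl]

end Forward

section Backward

variable {G : Type*} [AddCommGroup G]

private lemma no_strict_desc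
    (hA : ∀ f : ℕ → AddSubgroup G, (∀ n, f (n + 1) ≤ f n) → ∃ n, ∀ m, n ≤ m → f m = f n)
    (f : ℕ → AddSubgroup G) (hf : ∀ n, f (n + 1) < f n) : False := by
  obtain ⟨n, hn⟩ := hA f (fun n => (hf n).le)
  exact (hf n).ne (hn (n + 1) (Nat.le_succ n))

private lemma zsmul_inj_of_not_finOrder {x : G} (hx : ¬IsOfFinAddOrder x) :
    ∀ c : ℤ, c • x = 0 → c = 0 := by
  intro c hc
  by_contra hc0
  apply hx
  refine isOfFinAddOrder_iff_nsmul_eq_zero.2 ⟨c.natAbs, Int.natAbs_pos.2 hc0, ?_⟩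
  have h1 : ((c.natAbs : ℤ)) • x = 0 := by
    rcases Int.natAbs_eq c with h | h
    · rw [← h, hc]
    · rw [← neg_eq_iff_eq_neg.2 h, neg_zsmul, hc, neg_zero]
  rw [← natCast_zsmul, h1]

private lemma torsion_of_artinian
    (hA : ∀ f : ℕ → AddSubgroup G, (∀ n, f (n + 1) ≤ f n) → ∃ n, ∀ m, n ≤ m → f m = f n) :
    ∀ x : G, IsOfFinAddOrder x := by
  intro x
  by_contra hx
  have hinj := zsmul_inj_of_not_finOrder hx
  refine no_strict_desc hA (fun n => zmultiples ((2 ^ n : ℤ) • x)) (fun n => ?_)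
  have hle : zmultiples ((2 ^ (n + 1) : ℤ) • x) ≤ zmultiples ((2 ^ n : ℤ) • x) := by
    rw [AddSubgroup.zmultiples_le]
    refine mem_zmultiples_iff.2 ⟨2, ?_⟩
    rw [← mul_zsmul]
    ring_nf
  refine lt_of_le_of_ne hle ?_
  intro heq
  have hmem : (2 ^ n : ℤ) • x ∈ zmultiples ((2 ^ (n + 1) : ℤ) • x) := by
    have heq' : zmultiples ((2 ^ (n+1) : ℤ) • x) = zmultiples ((2 ^ n : ℤ) • x) := heq
    rw [heq']
    exact mem_zmultiples _
  obtain ⟨k, hk⟩ := mem_zmultiples_iff.1 hmem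
  rw [← mul_zsmul] at hk
  have h0 : (k * 2 ^ (n + 1) - 2 ^ n) • x = 0 := by rw [sub_zsmul, hk]; abel
  have := hinj _ h0
  have h2 : k * 2 ^ (n + 1) = 2 ^ n := by omega
  have h3 : (2:ℤ) ^ (n+1) = 2 * 2 ^ n := by ring
  rw [h3] at h2
  have h4 : (2 * k - 1) * 2 ^ n = 0 := by linarith
  have h5 : (2:ℤ) ^ n ≠ 0 := pow_ne_zero n two_ne_zero
  rcases mul_eq_zero.1 h4 with h6 | h6
  · omega
  · exact h5 h6

private lemma strict_desc_of_infinite_module (p : ℕ) [Fact p.Prime] (V : Type*)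
    [AddCommGroup V] [Module (ZMod p) V] [Infinite V] :
    ∃ W : ℕ → Submodule (ZMod p) V, ∀ n, W (n + 1) < W n := by
  classical
  set b := Module.Basis.ofVectorSpace (ZMod p) V with hb
  set S := Module.Basis.ofVectorSpaceIndex (ZMod p) V with hS
  have hSinf : S.Infinite := by
    intro hSfin
    haveI : Finite S := hSfin
    haveI : Fintype S := Fintype.ofFinite _
    haveI : FiniteDimensional (ZMod p) V := Module.Finite.of_basis b
    haveI : Finite V := Module.finite_of_finite (ZMod p)
    exact not_finite V
  set e := hSinf.natEmbedding with he
  set s : ℕ → Set S := fun n => {i | ∀ k, k < n → i ≠ e k} with hs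
  refine ⟨fun n => Submodule.span (ZMod p) (⇑b '' s n), fun n => ?_⟩
  have hle : Submodule.span (ZMod p) (⇑b '' s (n + 1)) ≤
      Submodule.span (ZMod p) (⇑b '' s n) := by
    apply Submodule.span_mono
    apply Set.image_mono
    intro i hi k hk
    exact hi k (Nat.lt_succ_of_lt hk)
  refine lt_of_le_of_ne hle ?_
  intro heq
  have hmem : e n ∈ s n := by
    intro k hk hne
    exact absurd (e.injective hne) (Nat.ne_of_gt hk)
  have h1 : b (e n) ∈ Submodule.span (ZMod p) (⇑b '' s n) :=
    Submodule.subset_span (Set.mem_image_of_mem _ hmem)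
  have heq' : Submodule.span (ZMod p) (⇑b '' s (n + 1)) = Submodule.span (ZMod p) (⇑b '' s n) := heq
  rw [← heq'] at h1
  have h2 : e n ∉ s (n + 1) := by
    intro hmem'
    exact hmem' n (Nat.lt_succ_self n) rfl
  exact (b.linearIndependent.notMem_span_image h2) h1

private lemma primeOrder_finite_of_artinian
    (hA : ∀ f : ℕ → AddSubgroup G, (∀ n, f (n + 1) ≤ f n) → ∃ n, ∀ m, n ≤ m → f m = f n) :
    {x : G | (addOrderOf x).Prime}.Finite := by
  classical
  have htor := torsion_of_artinian hA
  by_contra hXinf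
  rw [← Set.not_infinite, not_not] at hXinf
  set X := {x : G | (addOrderOf x).Prime} with hX
  set PP := addOrderOf '' X with hPP
  have hPPprime : ∀ p ∈ PP, p.Prime := by rintro p ⟨x, hx, rfl⟩; exact hx
  by_cases hPPfin : PP.Finite
  · -- some torsion subgroup is infinite
    have hcov : X ⊆ ⋃ p ∈ PP, ((torsA G p : AddSubgroup G) : Set G) := by
      intro x hx
      exact Set.mem_biUnion ⟨x, hx, rfl⟩ (mem_torsA.2 (addOrderOf_nsmul_eq_zero x))
    have hex : ∃ p ∈ PP, ¬ ((torsA G p : AddSubgroup G) : Set G).Finite := by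
      by_contra hall
      push_neg at hall
      exact hXinf ((hPPfin.biUnion (fun p hp => not_not.1 (not_not.2 (hall p hp)))).subset hcov)
    obtain ⟨p, hpPP, hpinf⟩ := hex
    have hp : p.Prime := hPPprime p hpPP
    haveI : Fact p.Prime := ⟨hp⟩
    set K := torsA G p with hK
    haveI hVinf : Infinite K := Set.infinite_coe_iff.2 hpinf
    letI : Module (ZMod p) K := AddCommGroup.zmodModule (by
      intro v
      apply Subtype.ext
      have hcoe : (((p • v : K)) : G) = p • (v : G) := rfl
      rw [hcoe]
      exact mem_torsA.1 v.2)
    obtain ⟨W, hW⟩ := strict_desc_of_infinite_module p K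
    refine no_strict_desc hA (fun n => AddSubgroup.map K.subtype (W n).toAddSubgroup)
      (fun n => ?_)
    have hlt : (W (n + 1)).toAddSubgroup < (W n).toAddSubgroup :=
      Submodule.toAddSubgroup_strictMono (hW n)
    refine lt_of_le_of_ne (AddSubgroup.map_mono hlt.le) ?_
    intro heq
    exact hlt.ne (AddSubgroup.map_injective K.subtype_injective heq)
  · have hPPinf : PP.Infinite := hPPfin
    set e : ℕ ↪ PP := Set.Infinite.natEmbedding PP hPPinf with he
    set pr : ℕ → ℕ := fun k => ((e k : ℕ)) with hpr
    have hpr_prime : ∀ k, (pr k).Prime := fun k => hPPprime _ (e k).2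
    have hpr_inj : Function.Injective pr := fun a b hab => e.injective (Subtype.ext hab)
    set m : ℕ → ℕ := fun n => ∏ k ∈ Finset.range n, pr k with hm
    set C : ℕ → AddSubgroup G := fun n =>
      { carrier := {x | (addOrderOf x).Coprime (m n)}
        zero_mem' := by
          show (addOrderOf (0 : G)).Coprime (m n)
          rw [addOrderOf_zero]
          exact Nat.coprime_one_left _
        add_mem' := by
          intro a b ha hb
          have hdvd : addOrderOf (a + b) ∣ Nat.lcm (addOrderOf a) (addOrderOf b) :=
            (AddCommute.all a b).addOrderOf_add_dvd_lcm
          have hl : (Nat.lcm (addOrderOf a) (addOrderOf b)).Coprime (m n) :=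
            Nat.Coprime.coprime_dvd_left
              (Nat.lcm_dvd (dvd_mul_right _ _) (dvd_mul_left _ _))
              (Nat.Coprime.mul ha hb)
          exact Nat.Coprime.coprime_dvd_left hdvd hl
        neg_mem' := by
          intro a ha
          show (addOrderOf (-a)).Coprime (m n)
          rwa [addOrderOf_neg] } with hC
    refine no_strict_desc hA C (fun n => ?_)
    have hle : C (n + 1) ≤ C n := by
      intro x hx
      have hdvd : m n ∣ m (n + 1) :=
        Finset.prod_dvd_prod_of_subset _ _ _ (Finset.range_subset_range.2 (Nat.le_succ n))
      exact Nat.Coprime.coprime_dvd_right hdvd hx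
    refine lt_of_le_of_ne hle ?_
    intro heq
    obtain ⟨x, hxX, hxord⟩ := (e n).2
    have hxCn : x ∈ C n := by
      show (addOrderOf x).Coprime (m n)
      rw [hxord]
      apply Nat.Coprime.prod_right
      intro k hk
      refine (Nat.coprime_primes (hpr_prime n) (hpr_prime k)).2 ?_
      intro hnk
      exact absurd (hpr_inj hnk) (Nat.ne_of_gt (Finset.mem_range.1 hk))
    have hxCn1 : x ∉ C (n + 1) := by
      intro hx
      have hx' : (addOrderOf x).Coprime (m (n + 1)) := hx
      rw [hxord] at hx'
      have hdvd : pr n ∣ m (n + 1) :=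
        Finset.dvd_prod_of_mem _ (Finset.mem_range.2 (Nat.lt_succ_self n))
      have hself : (pr n).Coprime (pr n) := Nat.Coprime.coprime_dvd_right hdvd hx'
      have : pr n = 1 := by rw [← Nat.gcd_self (pr n)]; exact hself
      exact (hpr_prime n).one_lt.ne' this
    exact hxCn1 (heq ▸ hxCn)

private lemma finDisc_of_artinian
    (hA : ∀ f : ℕ → AddSubgroup G, (∀ n, f (n + 1) ≤ f n) → ∃ n, ∀ m, n ≤ m → f m = f n) :
    ∃ F : Finset G, (0 : G) ∉ F ∧ ∀ H : AddSubgroup G, H ≠ ⊥ → ∃ g ∈ F, g ∈ H := by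
  have htor := torsion_of_artinian hA
  have hX := primeOrder_finite_of_artinian hA
  refine ⟨hX.toFinset, ?_, ?_⟩
  · rw [Set.Finite.mem_toFinset]
    intro h0
    rw [Set.mem_setOf_eq, addOrderOf_zero] at h0
    exact Nat.not_prime_one h0
  · intro H hH
    obtain ⟨x, hxH, hxp⟩ := exists_prime_order htor hH
    exact ⟨x, hX.mem_toFinset.2 hxp, hxH⟩

end Backward

/-- An abelian group is finitely discriminable if there is a finite subset of
`G \ {0}` meeting every non-trivial subgroup. -/
def AddFinDisc (G : Type*) [AddCommGroup G] : Prop :=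
  ∃ F : Finset G, (0 : G) ∉ F ∧ ∀ H : AddSubgroup G, H ≠ ⊥ → ∃ g ∈ F, g ∈ H

/-- An abelian group is artinian if every descending sequence of subgroups
eventually stabilizes. -/
def AddArtinian (G : Type*) [AddCommGroup G] : Prop :=
  ∀ f : ℕ → AddSubgroup G, (∀ n, f (n + 1) ≤ f n) → ∃ n, ∀ m, n ≤ m → f m = f n

/-- An abelian group is finitely discriminable if and only if it is artinian. -/
theorem addFinDisc_iff_addArtinian (G : Type*) [AddCommGroup G] :
    AddFinDisc G ↔ AddArtinian G := by
  constructor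
  · exact fun h => artinian_of_finDisc' h
  · exact fun h => finDisc_of_artinian h
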